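/- Let G be the amalgamated product defined in the context. For every positive integer m, G has exactly one subgroup of index m, namely G(m), the subgroup of G generated by ι_1(H_1 × mℤ) ∪ ι_2(H_2 × mℤ); that is, G(m) has index m in G, and every subgroup of G of index m equals G(m). Moreover G(m) is normal in G. -/

import Mathlib

/-- A group is Obraztsov if it is 2-generated, simple, complete (trivial center and all
automorphisms inner), torsion-free, and every nontrivial proper subgroup is infinite cyclic. -/
def IsObraztsov (G : Type*) [Group G] : Prop :=
  (∃ a b : G, Subgroup.closure {a, b} = ⊤) ∧
  IsSimpleGroup G ∧
  Subgroup.center G = ⊥ ∧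
  (∀ φ : G ≃* G, ∃ g : G, ∀ y : G, φ y = g * y * g⁻¹) ∧
  (∀ g : G, g ≠ 1 → ¬IsOfFinOrder g) ∧
  (∀ K : Subgroup G, K ≠ ⊥ → K ≠ ⊤ → IsCyclic K ∧ Infinite K)

/-- `h` generates a maximal cyclic subgroup. -/
def IsMaxCyclicGen {H : Type*} [Group H] (h : H) : Prop :=
  ∀ w : H, Subgroup.zpowers h ≤ Subgroup.zpowers w →
    Subgroup.zpowers h = Subgroup.zpowers w

/-- `u i = (h i, 1) ∈ H i × ℤ`. -/
def amalgU {H : Bool → Type*} [∀ i, Group (H i)] (h : ∀ i, H i) (i : Bool) :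
    H i × Multiplicative ℤ :=
  (h i, Multiplicative.ofAdd (1 : ℤ))

/-- The homomorphism `ℤ → H i × ℤ` sending `1 ↦ u i`. -/
def amalgMap {H : Bool → Type*} [∀ i, Group (H i)] (h : ∀ i, H i) (i : Bool) :
    Multiplicative ℤ →* H i × Multiplicative ℤ :=
  zpowersHom _ (amalgU h i)

/-- The amalgamated free product `G = (H₁ × ℤ) ∗_{u₁ = u₂} (H₂ × ℤ)`. -/
abbrev Amalg (H : Bool → Type*) [∀ i, Group (H i)] (h : ∀ i, H i) : Type _ :=
  Monoid.PushoutI (amalgMap h)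


/-- The subgroup `G(m)` of the amalgam, generated by `ι₁(H₁ × mℤ)` and `ι₂(H₂ × mℤ)`. -/
def AmalgGm (H : Bool → Type*) [∀ i, Group (H i)] (h : ∀ i, H i) (m : ℕ) :
    Subgroup (Amalg H h) :=
  ⨆ i : Bool, Subgroup.map (Monoid.PushoutI.of (φ := amalgMap h) i)
    ((⊤ : Subgroup (H i)).prod (Subgroup.zpowers (Multiplicative.ofAdd (m : ℤ))))

namespace AmalgAux

open Monoid Monoid.PushoutI Subgroup Multiplicative

variable {H : Bool → Type*} [∀ i, Group (H i)] (h : ∀ i, H i)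

/-- The common image of the `u i` in the amalgam. -/
def cc : Amalg H h := Monoid.PushoutI.base (amalgMap h) (ofAdd 1)

lemma of_u (i : Bool) : Monoid.PushoutI.of (φ := amalgMap h) i (amalgU h i) = cc h := by
  have := Monoid.PushoutI.of_apply_eq_base (amalgMap h) i (ofAdd 1)
  simpa [amalgMap, cc] using this

lemma of_u_pow (i : Bool) (t : ℤ) :
    Monoid.PushoutI.of (φ := amalgMap h) i (amalgU h i ^ t) = cc h ^ t := by
  rw [map_zpow, of_u]

lemma ofAdd_eq_pow (t : ℤ) : (ofAdd t : Multiplicative ℤ) = (ofAdd (1:ℤ)) ^ t := by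
  simpa using Int.ofAdd_mul 1 t

lemma u_pow (i : Bool) (t : ℤ) : amalgU h i ^ t = ((h i) ^ t, ofAdd t) := by
  refine Prod.ext rfl ?_
  show (ofAdd (1:ℤ)) ^ t = ofAdd t
  exact (ofAdd_eq_pow t).symm

lemma of_decomp (i : Bool) (a : H i × Multiplicative ℤ) :
    Monoid.PushoutI.of (φ := amalgMap h) i a =
      Monoid.PushoutI.of (φ := amalgMap h) i (a.1 * (h i) ^ (-(toAdd a.2)), 1) *
        cc h ^ (toAdd a.2) := by
  rw [← of_u_pow, ← map_mul]
  congr 1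
  ext
  · simp [u_pow, mul_assoc]
  · simp [u_pow]

lemma base_eq (y : Multiplicative ℤ) :
    Monoid.PushoutI.base (amalgMap h) y = cc h ^ (toAdd y) := by
  rw [cc, ← map_zpow]
  congr 1
  rw [← ofAdd_eq_pow]
  simp

/-- Generation lemma. -/
lemma eq_top_of (N : Subgroup (Amalg H h))
    (h1 : ∀ (i : Bool) (x : H i), Monoid.PushoutI.of (φ := amalgMap h) i (x, 1) ∈ N)
    (h2 : cc h ∈ N) : ∀ g : Amalg H h, g ∈ N := by
  intro g
  induction g using Monoid.PushoutI.induction_on with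
  | of i a => rw [of_decomp] ; exact mul_mem (h1 i _) (zpow_mem h2 _)
  | base y => rw [base_eq] ; exact zpow_mem h2 _
  | mul x y hx hy => exact mul_mem hx hy

variable (m : ℕ)

lemma mem_Gm (i : Bool) (x : H i) (t : ℤ) (ht : (m:ℤ) ∣ t) :
    Monoid.PushoutI.of (φ := amalgMap h) i (x, ofAdd t) ∈ AmalgGm H h m := by
  have hle := le_iSup (fun i : Bool => Subgroup.map (Monoid.PushoutI.of (φ := amalgMap h) i)
    ((⊤ : Subgroup (H i)).prod (Subgroup.zpowers (ofAdd (m : ℤ))))) i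
  apply hle
  refine ⟨(x, ofAdd t), ?_, rfl⟩
  refine Subgroup.mem_prod.2 ⟨trivial, ?_⟩
  obtain ⟨k, rfl⟩ := ht
  exact ⟨k, (Int.ofAdd_mul _ _).symm⟩

lemma cc_pow_mem : cc h ^ (m : ℤ) ∈ AmalgGm H h m := by
  rw [← of_u_pow h true, u_pow]
  exact mem_Gm h m true _ _ dvd_rfl


/-- The projection to `ℤ`. -/
def pi : Amalg H h →* Multiplicative ℤ :=
  Monoid.PushoutI.lift (fun i => MonoidHom.snd _ _) (MonoidHom.id _) (fun i =>
    MonoidHom.ext fun y => by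
      show ((amalgU h i) ^ (toAdd y)).2 = y
      rw [u_pow]
      simp)

@[simp] lemma pi_of (i : Bool) (a : H i × Multiplicative ℤ) :
    pi h (Monoid.PushoutI.of (φ := amalgMap h) i a) = a.2 :=
  Monoid.PushoutI.lift_of _ _ _ _

@[simp] lemma pi_cc : pi h (cc h) = ofAdd 1 := by
  rw [← of_u h true, pi_of]
  rfl

lemma pi_surjective : Function.Surjective (pi h) := fun z =>
  ⟨cc h ^ (toAdd z), by rw [map_zpow, pi_cc, ← ofAdd_eq_pow]; simp⟩

lemma Gm_le_comap : AmalgGm H h m ≤ Subgroup.comap (pi h) (zpowers (ofAdd (m:ℤ))) := by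
  refine iSup_le fun i => Subgroup.map_le_iff_le_comap.2 fun p hp => ?_
  have h2 := (Subgroup.mem_prod.1 hp).2
  simp only [Subgroup.mem_comap, pi_of]
  exact h2

lemma conj_cc_pow_le (s : ℤ) :
    AmalgGm H h m ≤ Subgroup.comap ((MulAut.conj (cc h ^ s)).toMonoidHom) (AmalgGm H h m) := by
  refine iSup_le fun i => Subgroup.map_le_iff_le_comap.2 fun p hp => ?_
  obtain ⟨-, h2⟩ := Subgroup.mem_prod.1 hp
  obtain ⟨k, hk⟩ := Subgroup.mem_zpowers_iff.1 h2
  simp only [Subgroup.mem_comap, MulEquiv.coe_toMonoidHom, MulAut.conj_apply]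
  have e1 : cc h ^ s * Monoid.PushoutI.of (φ := amalgMap h) i p * (cc h ^ s)⁻¹ =
      Monoid.PushoutI.of (φ := amalgMap h) i (amalgU h i ^ s * p * (amalgU h i ^ s)⁻¹) := by
    rw [map_mul, map_mul, map_inv, of_u_pow]
  have e2 : (amalgU h i ^ s * p * (amalgU h i ^ s)⁻¹) =
      (((h i) ^ s * p.1 * ((h i) ^ s)⁻¹ : H i), p.2) := by
    rw [u_pow]
    refine Prod.ext rfl ?_
    show ofAdd s * p.2 * (ofAdd s)⁻¹ = p.2
    rw [mul_comm (ofAdd s) p.2, mul_inv_cancel_right]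
  have e3 : p.2 = ofAdd ((m : ℤ) * k) := by rw [Int.ofAdd_mul]; exact hk.symm
  rw [e1, e2, e3]
  exact mem_Gm h m i _ _ (Dvd.intro k rfl)

lemma cc_mem_normalizer : cc h ∈ Subgroup.normalizer (AmalgGm H h m : Set (Amalg H h)) := by
  refine Subgroup.mem_normalizer_iff.2 fun g => ⟨fun hg => ?_, fun hg => ?_⟩
  · have := conj_cc_pow_le h m 1 hg
    simpa using this
  · have := conj_cc_pow_le h m (-1) hg
    simp only [Subgroup.mem_comap, MulEquiv.coe_toMonoidHom, MulAut.conj_apply, zpow_neg,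
      zpow_one, inv_inv] at this
    have e : (cc h)⁻¹ * (cc h * g * (cc h)⁻¹) * cc h = g := by group
    rwa [e] at this

lemma Gm_normal : (AmalgGm H h m).Normal := by
  rw [← Subgroup.normalizer_eq_top_iff]
  rw [eq_top_iff]
  intro g _
  refine eq_top_of h (Subgroup.normalizer (AmalgGm H h m : Set (Amalg H h))) (fun i x => ?_) (cc_mem_normalizer h m) g
  exact Subgroup.le_normalizer (by simpa using mem_Gm h m i x 0 (dvd_zero _))


lemma top_eq_Gm_sup : (⊤ : Subgroup (Amalg H h)) = AmalgGm H h m ⊔ zpowers (cc h) := by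
  refine le_antisymm ?_ le_top
  intro g _
  refine eq_top_of h _ (fun i x => ?_) ?_ g
  · exact Subgroup.mem_sup_left (by simpa using mem_Gm h m i x 0 (dvd_zero _))
  · exact Subgroup.mem_sup_right (Subgroup.mem_zpowers _)

lemma Gm_eq_comap : AmalgGm H h m = Subgroup.comap (pi h) (zpowers (ofAdd (m:ℤ))) := by
  refine le_antisymm (Gm_le_comap h m) ?_
  intro g hg
  have hN : (AmalgGm H h m).Normal := Gm_normal h m
  have hmem : g ∈ ((AmalgGm H h m ⊔ zpowers (cc h) : Subgroup (Amalg H h)) : Set (Amalg H h)) := by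
    rw [← top_eq_Gm_sup h m]; trivial
  rw [Subgroup.normal_mul] at hmem
  obtain ⟨n, hn, w, hw, rfl⟩ := hmem
  obtain ⟨k, rfl⟩ := Subgroup.mem_zpowers_iff.1 hw
  have hpin : pi h n ∈ zpowers (ofAdd (m:ℤ)) := Gm_le_comap h m hn
  have hpig : pi h (n * cc h ^ k) ∈ zpowers (ofAdd (m:ℤ)) := hg
  rw [map_mul, map_zpow, pi_cc] at hpig
  have hk : (ofAdd (1:ℤ)) ^ k ∈ zpowers (ofAdd (m:ℤ)) := by
    have := mul_mem (inv_mem hpin) hpig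
    rwa [inv_mul_cancel_left] at this
  obtain ⟨j, hj⟩ := Subgroup.mem_zpowers_iff.1 hk
  have hkj : k = (m:ℤ) * j := by
    have : ofAdd ((m:ℤ) * j) = ofAdd ((1:ℤ) * k) := by
      rw [Int.ofAdd_mul, Int.ofAdd_mul, hj]
    simpa using (ofAdd.injective this).symm
  refine mul_mem hn ?_
  rw [hkj, zpow_mul]
  exact zpow_mem (cc_pow_mem h m) j

lemma zpowers_ofAdd_eq (a : ℤ) :
    zpowers (ofAdd a : Multiplicative ℤ) = AddSubgroup.toSubgroup (AddSubgroup.zmultiples a) := by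
  ext z
  show z ∈ zpowers (ofAdd a) ↔ toAdd z ∈ AddSubgroup.zmultiples a
  rw [Subgroup.mem_zpowers_iff, AddSubgroup.mem_zmultiples_iff]
  constructor
  · rintro ⟨k, rfl⟩
    exact ⟨k, by rw [toAdd_zpow, toAdd_ofAdd]⟩
  · rintro ⟨k, hk⟩
    exact ⟨k, by rw [← ofAdd_zsmul, hk, ofAdd_toAdd]⟩

lemma index_zpowers_ofAdd (a : ℤ) :
    (zpowers (ofAdd a : Multiplicative ℤ)).index = a.natAbs := by
  rw [zpowers_ofAdd_eq, AddSubgroup.index_toSubgroup, Int.index_zmultiples]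

/-- Any subgroup of `Multiplicative ℤ` of index `m > 0` is `zpowers (ofAdd m)`. -/
lemma int_unique_subgroup (hm : m ≠ 0) (S : Subgroup (Multiplicative ℤ)) (hS : S.index = m) :
    S = zpowers (ofAdd (m:ℤ)) := by
  haveI hSn : S.Normal := Subgroup.normal_of_comm S
  have hle : zpowers (ofAdd (m:ℤ)) ≤ S := by
    rw [Subgroup.zpowers_le]
    have := Subgroup.pow_index_mem S (ofAdd (1:ℤ))
    rwa [hS, show (ofAdd (1:ℤ)) ^ m = ofAdd (m:ℤ) by
      rw [← ofAdd_nsmul]; norm_num] at this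
  have hidx : (zpowers (ofAdd (m:ℤ))).index = m := by
    rw [index_zpowers_ofAdd]; simp
  have := Subgroup.relIndex_mul_index hle
  rw [hS, hidx] at this
  have hrel : (zpowers (ofAdd (m:ℤ))).relIndex S = 1 := by
    have hmp : 0 < m := Nat.pos_of_ne_zero hm
    have h2 : (zpowers (ofAdd (m:ℤ))).relIndex S * m = 1 * m := by rw [one_mul, this]
    exact Nat.eq_of_mul_eq_mul_right hmp h2
  exact le_antisymm (Subgroup.relIndex_eq_one.1 hrel) hle


lemma Gm_index : (AmalgGm H h m).index = m := by
  rw [Gm_eq_comap, Subgroup.index_comap_of_surjective _ (pi_surjective h), index_zpowers_ofAdd]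
  simp

lemma Hi_infinite (hObr : ∀ i, IsObraztsov (H i)) (i : Bool) : Infinite (H i) := by
  obtain ⟨-, hsimple, -, -, htf, -⟩ := hObr i
  haveI := hsimple
  obtain ⟨g, hg⟩ := exists_ne (1 : H i)
  exact Infinite.of_injective (fun n : ℤ => g ^ n)
    (injective_zpow_iff_not_isOfFinOrder.2 (htf g hg))

lemma of_inl_mem_of_normal (hObr : ∀ i, IsObraztsov (H i))
    (K : Subgroup (Amalg H h)) (hK : K.Normal) (hKf : K.FiniteIndex)
    (i : Bool) (x : H i) : Monoid.PushoutI.of (φ := amalgMap h) i (x, 1) ∈ K := by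
  haveI := hK; haveI := hKf
  haveI : Finite (Amalg H h ⧸ K) := Subgroup.finite_quotient_of_finiteIndex (H := K)
  set ψ : H i →* Amalg H h ⧸ K :=
    (QuotientGroup.mk' K).comp ((Monoid.PushoutI.of (φ := amalgMap h) i).comp
      (MonoidHom.inl (H i) (Multiplicative ℤ))) with hψ
  haveI hsimple := (hObr i).2.1
  rcases Subgroup.Normal.eq_bot_or_eq_top (MonoidHom.normal_ker ψ) with hbot | htop
  · exfalso
    have hinj : Function.Injective ψ := (MonoidHom.ker_eq_bot_iff ψ).1 hbot
    haveI : Finite (H i) := Finite.of_injective ψ hinj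
    haveI := Hi_infinite (H := H) hObr i
    exact not_finite (H i)
  · have hx : x ∈ ψ.ker := htop ▸ Subgroup.mem_top x
    rw [MonoidHom.mem_ker, hψ] at hx
    simpa [QuotientGroup.eq_one_iff] using hx

lemma unique_index_m (hObr : ∀ i, IsObraztsov (H i)) (hm : m ≠ 0)
    (B : Subgroup (Amalg H h)) (hB : B.index = m) : B = AmalgGm H h m := by
  haveI hBf : B.FiniteIndex := ⟨by rw [hB]; exact hm⟩
  have hcore : ∀ (i : Bool) (x : H i),
      Monoid.PushoutI.of (φ := amalgMap h) i (x, 1) ∈ B.normalCore :=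
    fun i x => of_inl_mem_of_normal h hObr B.normalCore B.normalCore_normal inferInstance i x
  set M : Subgroup (Amalg H h) := Subgroup.normalClosure
    {g | ∃ (i : Bool) (x : H i), g = Monoid.PushoutI.of (φ := amalgMap h) i (x, 1)} with hM
  haveI : M.Normal := Subgroup.normalClosure_normal
  have hMker : M ≤ (pi h).ker := by
    refine Subgroup.normalClosure_le_normal ?_
    rintro g ⟨i, x, rfl⟩
    show pi h _ = 1
    rw [pi_of]
  have hMcore : M ≤ B.normalCore := by
    refine Subgroup.normalClosure_le_normal ?_
    rintro g ⟨i, x, rfl⟩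
    exact hcore i x
  have hkerM : (pi h).ker ≤ M := by
    intro g hg
    have hmem : g ∈ ((M ⊔ zpowers (cc h) : Subgroup (Amalg H h)) : Set (Amalg H h)) := by
      have : (⊤ : Subgroup (Amalg H h)) ≤ M ⊔ zpowers (cc h) := by
        intro g' _
        refine eq_top_of h _ (fun i x => ?_) ?_ g'
        · exact Subgroup.mem_sup_left (Subgroup.subset_normalClosure ⟨i, x, rfl⟩)
        · exact Subgroup.mem_sup_right (Subgroup.mem_zpowers _)
      exact this trivial
    rw [Subgroup.normal_mul] at hmem
    obtain ⟨n, hn, w, hw, rfl⟩ := hmem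
    obtain ⟨k, rfl⟩ := Subgroup.mem_zpowers_iff.1 hw
    have h1 : pi h (n * cc h ^ k) = 1 := hg
    rw [map_mul, map_zpow, pi_cc, hMker hn, one_mul, ← ofAdd_eq_pow] at h1
    have hk0 : k = 0 := by simpa using ofAdd.injective (h1.trans (ofAdd_zero).symm)
    rw [hk0, zpow_zero]
    simpa using hn
  have hkerB : (pi h).ker ≤ B := le_trans hkerM (le_trans hMcore B.normalCore_le)
  have hmap : Subgroup.map (pi h) B = zpowers (ofAdd (m:ℤ)) := by
    refine int_unique_subgroup m hm _ ?_
    rw [Subgroup.index_map, sup_eq_left.2 hkerB, hB,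
      MonoidHom.range_eq_top.2 (pi_surjective h), Subgroup.index_top, mul_one]
  have hBcomap : B = Subgroup.comap (pi h) (Subgroup.map (pi h) B) := by
    rw [Subgroup.comap_map_eq, sup_eq_left.2 hkerB]
  rw [hBcomap, hmap, ← Gm_eq_comap]

end AmalgAux

theorem stmt_18 (H : Bool → Type*) [∀ i, Group (H i)]
    (hObr : ∀ i, IsObraztsov (H i))
    (h : ∀ i, H i) (hmax : ∀ i, IsMaxCyclicGen (h i))
    (m : ℕ) (hm : 0 < m) :
    (AmalgGm H h m).Normal ∧
    (AmalgGm H h m).index = m ∧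
    ∀ B : Subgroup (Amalg H h), B.index = m → B = AmalgGm H h m := by
  exact ⟨AmalgAux.Gm_normal h m, AmalgAux.Gm_index h m,
    fun B hB => AmalgAux.unique_index_m h m hObr (Nat.pos_iff_ne_zero.1 hm) B hB⟩
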